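/- arXiv:0905.4758 — 2 statements merged into one kernel-verified Lean document; each statement's English description precedes it below -/
import Mathlib

section
/- Define F(n) = Σ_{π ∈ S_n} q^{(c-ba)(π)}. Then for n ≥ 1, F(n) = Σ_{k=1}^{n} a(n,k) F(n−k) with F(0) = 1, where a(n,k) = Σ_{n ≥ t_1 > ⋯ > t_k ≥ 1} Π_{j=1}^{k−1} (q^{n−t_j} − 1). -/
open Finset Polynomial

/-- A permutation of `Fin n` as a word `{0,...,n-1} → {1,...,n}`. -/
def toWord (n : ℕ) (π : Equiv.Perm (Fin n)) : ℕ → ℕ :=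
  fun k => if h : k < n then (π ⟨k, h⟩ : ℕ) + 1 else 0

/-- The number of occurrences of (c-ba) in a word of length `ℓ`:
triples (j,i,i+1) with j < i and w (i+1) < w i < w j. -/
def cbaCount (w : ℕ → ℕ) (ℓ : ℕ) : ℕ :=
  ((range ℓ ×ˢ range ℓ).filter
    (fun p => p.1 < p.2 ∧ p.2 + 1 < ℓ ∧ w (p.2 + 1) < w p.2 ∧ w p.2 < w p.1)).card

/-- `F n = Σ_{π ∈ S_n} q^{(c-ba)(π)}`. -/
noncomputable def F (n : ℕ) : Polynomial ℤ :=
  ∑ π : Equiv.Perm (Fin n), (X : Polynomial ℤ) ^ cbaCount (toWord n π) n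

/-- `a n k = Σ_{n ≥ t_1 > ⋯ > t_k ≥ 1} Π_{j=1}^{k-1} (q^{n - t_j} - 1)`; the sum ranges
over k-element subsets `S = {t_1 > ⋯ > t_k}` of `{1,...,n}`, and if `L` is `S` sorted
increasingly then `t_j = L[k-j]` (0-based). -/
noncomputable def a (n k : ℕ) : Polynomial ℤ :=
  ∑ S ∈ (Finset.Icc 1 n).powersetCard k,
    ∏ j ∈ range (k - 1),
      ((X : Polynomial ℤ) ^ (n - (S.sort (· ≤ ·)).getD (k - j - 1) 0) - 1)

namespace CbaAux

noncomputable def G (N u : ℕ) : Polynomial ℤ :=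
  ∑ π : Equiv.Perm (Fin (N + 1)),
    if (π (Fin.last N) : ℕ) = u then
      (X : Polynomial ℤ) ^ cbaCount (toWord (N + 1) π) (N + 1) else 0

lemma F_zero : F 0 = 1 := by
  rw [F]
  have h1 : ∀ π : Equiv.Perm (Fin 0), cbaCount (toWord 0 π) 0 = 0 := by
    intro π; simp [cbaCount]
  simp [h1]

lemma F_succ_sum (N : ℕ) : F (N + 1) = ∑ u ∈ range (N + 1), G N u := by
  unfold G
  rw [Finset.sum_comm, F]
  refine Finset.sum_congr rfl fun π _ => ?_
  rw [Finset.sum_ite_eq (range (N+1)) ((π (Fin.last N) : ℕ))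
    (fun _ => (X : Polynomial ℤ) ^ cbaCount (toWord (N + 1) π) (N + 1))]
  simp [Fin.is_lt, Fin.is_le]

/-- insertion of a new last entry with value `t` -/
def emb {M : ℕ} (t : Fin (M + 1)) (π : Equiv.Perm (Fin M)) : Equiv.Perm (Fin (M + 1)) :=
  finSuccEquivLast.trans ((Equiv.optionCongr π).trans (finSuccEquiv' t).symm)

@[simp] lemma emb_castSucc {M : ℕ} (t : Fin (M + 1)) (π : Equiv.Perm (Fin M)) (i : Fin M) :
    emb t π (Fin.castSucc i) = t.succAbove (π i) := by
  simp [emb]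

@[simp] lemma emb_last {M : ℕ} (t : Fin (M + 1)) (π : Equiv.Perm (Fin M)) :
    emb t π (Fin.last M) = t := by
  simp [emb]

lemma emb_bijective (M : ℕ) :
    Function.Bijective (fun p : Fin (M + 1) × Equiv.Perm (Fin M) => emb p.1 p.2) := by
  rw [Fintype.bijective_iff_injective_and_card]
  constructor
  · rintro ⟨t, π⟩ ⟨t', π'⟩ h
    simp only at h
    have ht : t = t' := by
      have := congrArg (fun σ : Equiv.Perm (Fin (M+1)) => σ (Fin.last M)) h
      simpa using this
    subst ht
    have hπ : π = π' := by
      refine Equiv.ext fun i => Fin.succAbove_right_injective (p := t) ?_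
      have := congrArg (fun σ : Equiv.Perm (Fin (M+1)) => σ (Fin.castSucc i)) h
      simpa using this
    simp [hπ]
  · simp [Fintype.card_perm, Nat.factorial_succ]

section Word

variable {M : ℕ} (t : Fin (M + 2)) (π : Equiv.Perm (Fin (M + 1)))

lemma word_val (k : ℕ) (hk : k < M + 1) :
    toWord (M + 2) (emb t π) k = (t.succAbove (π ⟨k, hk⟩) : ℕ) + 1 := by
  rw [toWord]
  rw [dif_pos (by omega : k < M + 2)]
  congr 2
  have h : (⟨k, by omega⟩ : Fin (M + 2)) = Fin.castSucc ⟨k, hk⟩ := rfl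
  rw [h, emb_castSucc]

lemma word_last : toWord (M + 2) (emb t π) (M + 1) = (t : ℕ) + 1 := by
  rw [toWord, dif_pos (by omega : M + 1 < M + 2)]
  congr 2
  have h : (⟨M + 1, by omega⟩ : Fin (M + 2)) = Fin.last (M + 1) := rfl
  rw [h, emb_last]

lemma word_valM : toWord (M + 2) (emb t π) M = ((t.succAbove (π (Fin.last M))) : ℕ) + 1 := by
  have h3 := word_val t π M (by omega)
  have he : (⟨M, by omega⟩ : Fin (M + 1)) = Fin.last M := rfl
  rwa [he] at h3

lemma word_val' (k : ℕ) (hk : k < M + 1) :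
    toWord (M + 1) π k = (π ⟨k, hk⟩ : ℕ) + 1 := by
  rw [toWord, dif_pos hk]

lemma word_lt (k l : ℕ) (hk : k < M + 1) (hl : l < M + 1) :
    toWord (M + 2) (emb t π) k < toWord (M + 2) (emb t π) l ↔
      toWord (M + 1) π k < toWord (M + 1) π l := by
  rw [word_val t π k hk, word_val t π l hl, word_val' π k hk, word_val' π l hl]
  simp only [Nat.add_lt_add_iff_right]
  rw [← Fin.lt_def, ← Fin.lt_def, Fin.succAbove_lt_succAbove_iff]

lemma word_end_lt :
    (toWord (M + 2) (emb t π) (M + 1) < toWord (M + 2) (emb t π) M ↔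
      (t : ℕ) ≤ (π (Fin.last M) : ℕ)) := by
  rw [word_last, word_valM]
  constructor
  · intro h
    have h2 : t < t.succAbove (π (Fin.last M)) := by rw [Fin.lt_def]; omega
    rw [Fin.lt_succAbove_iff_le_castSucc] at h2
    simpa [Fin.le_def] using h2
  · intro h
    have h2 : t < t.succAbove (π (Fin.last M)) := by
      rw [Fin.lt_succAbove_iff_le_castSucc]
      simpa [Fin.le_def] using h
    rw [Fin.lt_def] at h2
    omega

lemma count_gt :
    ((range M).filter fun j => toWord (M + 1) π M < toWord (M + 1) π j).card
      = M - (π (Fin.last M) : ℕ) := by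
  have hstep : ((range (M + 1)).filter
      fun j => toWord (M + 1) π M < toWord (M + 1) π j)
      = ((range M).filter fun j => toWord (M + 1) π M < toWord (M + 1) π j) := by
    rw [range_add_one, filter_insert, if_neg (lt_irrefl _)]
  rw [← hstep, card_filter]
  rw [← Fin.sum_univ_eq_sum_range
    (fun j => if toWord (M + 1) π M < toWord (M + 1) π j then (1 : ℕ) else 0) (M + 1)]
  have hM : toWord (M + 1) π M = (π (Fin.last M) : ℕ) + 1 := by
    have := word_val' π M (by omega)
    have he : (⟨M, by omega⟩ : Fin (M + 1)) = Fin.last M := rfl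
    rwa [he] at this
  have hterm : ∀ i : Fin (M + 1),
      (if toWord (M + 1) π M < toWord (M + 1) π (i : ℕ) then (1 : ℕ) else 0)
        = (fun y : Fin (M + 1) =>
            if (π (Fin.last M) : ℕ) < (y : ℕ) then (1 : ℕ) else 0) (π i) := by
    intro i
    rw [hM, word_val' π (i : ℕ) i.isLt]
    have he : (⟨(i : ℕ), i.isLt⟩ : Fin (M + 1)) = i := rfl
    rw [he]
    exact if_congr (by omega) rfl rfl
  rw [Finset.sum_congr rfl fun i _ => hterm i]
  rw [Equiv.sum_comp π (fun y : Fin (M + 1) =>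
      if (π (Fin.last M) : ℕ) < (y : ℕ) then (1 : ℕ) else 0)]
  rw [← card_filter]
  have h4 : (univ.filter fun y : Fin (M + 1) => (π (Fin.last M) : ℕ) < (y : ℕ))
      = Finset.Ioi (π (Fin.last M)) := by
    ext y
    simp only [mem_filter, mem_univ, true_and, mem_Ioi, Fin.lt_def]
  rw [h4, Fin.card_Ioi]
  omega

lemma cba_emb :
    cbaCount (toWord (M + 2) (emb t π)) (M + 2)
      = cbaCount (toWord (M + 1) π) (M + 1)
        + (if (t : ℕ) ≤ (π (Fin.last M) : ℕ) then M - (π (Fin.last M) : ℕ) else 0) := by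
  classical
  rw [cbaCount, ← Finset.card_filter_add_card_filter_not
    (p := fun p : ℕ × ℕ => p.2 < M), Finset.filter_filter, Finset.filter_filter]
  congr 1
  · -- interior part
    rw [cbaCount]
    congr 1
    ext ⟨j, i⟩
    simp only [mem_filter, mem_product, mem_range]
    constructor
    · rintro ⟨⟨hj2, hi2⟩, ⟨hji, hi1, hba, hcb⟩, hiM⟩
      exact ⟨⟨by omega, by omega⟩, hji, by omega,
        (word_lt t π (i + 1) i (by omega) (by omega)).mp hba,
        (word_lt t π i j (by omega) (by omega)).mp hcb⟩
    · rintro ⟨⟨hj2, hi2⟩, hji, hi1, hba, hcb⟩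
      exact ⟨⟨by omega, by omega⟩, ⟨hji, by omega,
        (word_lt t π (i + 1) i (by omega) (by omega)).mpr hba,
        (word_lt t π i j (by omega) (by omega)).mpr hcb⟩, by omega⟩
  · -- boundary part
    by_cases hc : (t : ℕ) ≤ (π (Fin.last M) : ℕ)
    · rw [if_pos hc, ← count_gt π]
      rw [← Finset.card_image_of_injective
        ((range M).filter fun j => toWord (M + 1) π M < toWord (M + 1) π j)
        (f := fun j => (j, M)) (fun x y hxy => ((Prod.mk.injEq _ _ _ _).mp hxy).1)]
      congr 1
      ext ⟨j, i⟩
      simp only [mem_filter, mem_product, mem_range, Finset.mem_image]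
      constructor
      · rintro ⟨⟨hj2, hi2⟩, ⟨hji, hi1, hba, hcb⟩, hiM⟩
        have hiM' : i = M := by omega
        rw [hiM'] at hcb
        exact ⟨j, ⟨by omega, (word_lt t π M j (by omega) (by omega)).mp hcb⟩, by rw [hiM']⟩
      · rintro ⟨j', ⟨hj', hcb⟩, hpair⟩
        obtain ⟨rfl, rfl⟩ := Prod.mk.inj hpair
        refine ⟨⟨by omega, by omega⟩, ⟨by omega, by omega,
          (word_end_lt t π).mpr hc,
          (word_lt t π M j' (by omega) (by omega)).mpr hcb⟩, by omega⟩
    · rw [if_neg hc]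
      rw [Finset.card_eq_zero, Finset.filter_eq_empty_iff]
      rintro ⟨j, i⟩ hmem
      rintro ⟨⟨hji, hi1, hba, hcb⟩, hiM⟩
      simp only [mem_product, mem_range] at hmem
      have hiM' : i = M := by omega
      rw [hiM'] at hba
      exact hc ((word_end_lt t π).mp hba)

end Word
noncomputable def B (p m : ℕ) : Polynomial ℤ :=
  ∑ S ∈ (range p).powersetCard m, ∏ e ∈ S, ((X : Polynomial ℤ) ^ e - 1)

lemma B_zero_right (p : ℕ) : B p 0 = 1 := by simp [B]

lemma B_eq_zero (p m : ℕ) (h : p < m) : B p m = 0 := by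
  rw [B, Finset.powersetCard_eq_empty.mpr (by simpa using h), Finset.sum_empty]

lemma B_succ (p m : ℕ) : B (p + 1) (m + 1)
    = B p (m + 1) + ((X : Polynomial ℤ) ^ p - 1) * B p m := by
  classical
  rw [B, range_add_one, Finset.powersetCard_succ_insert (by simp)]
  have hdisj : Disjoint ((range p).powersetCard (m + 1))
      (((range p).powersetCard m).image (insert p)) := by
    rw [Finset.disjoint_left]
    intro S hS hS'
    rw [Finset.mem_powersetCard] at hS
    obtain ⟨T, hT, rfl⟩ := Finset.mem_image.mp hS'
    exact absurd (hS.1 (Finset.mem_insert_self p T)) (by simp)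
  rw [Finset.sum_union hdisj]
  congr 1
  rw [Finset.sum_image (by
    intro x hx y hy hxy
    simp only [Finset.mem_coe, Finset.mem_powersetCard] at hx hy
    have hpx : p ∉ x := fun h => absurd (hx.1 h) (by simp)
    have hpy : p ∉ y := fun h => absurd (hy.1 h) (by simp)
    rw [← Finset.erase_insert hpx, hxy, Finset.erase_insert hpy])]
  rw [B, Finset.mul_sum]
  refine Finset.sum_congr rfl fun T hT => ?_
  rw [Finset.mem_powersetCard] at hT
  have hpT : p ∉ T := fun h => absurd (hT.1 h) (by simp)
  rw [Finset.prod_insert hpT]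

lemma G_zero : G 0 0 = (1 : Polynomial ℤ) := by
  rw [G]
  have h0 : ∀ π : Equiv.Perm (Fin 1), (π (Fin.last 0) : ℕ) = 0 := by
    intro π; have := (π (Fin.last 0)).isLt; omega
  have hc : ∀ π : Equiv.Perm (Fin 1), cbaCount (toWord 1 π) 1 = 0 := by
    intro π
    rw [cbaCount]
    rw [Finset.card_eq_zero, Finset.filter_eq_empty_iff]
    rintro ⟨j, i⟩ hp
    simp only [mem_product, mem_range] at hp
    rintro ⟨h1, _⟩
    omega
  simp only [h0, hc, if_pos, pow_zero]
  simp

lemma G_rec (M t : ℕ) (ht : t < M + 2) :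
    G (M + 1) t = ∑ v ∈ range (M + 1),
      (X : Polynomial ℤ) ^ (if t ≤ v then M - v else 0) * G M v := by
  classical
  have hL : G (M + 1) t = ∑ π : Equiv.Perm (Fin (M + 1)),
      (X : Polynomial ℤ) ^ (if t ≤ (π (Fin.last M) : ℕ) then M - (π (Fin.last M) : ℕ) else 0)
        * (X : Polynomial ℤ) ^ cbaCount (toWord (M + 1) π) (M + 1) := by
    rw [G]
    rw [← Fintype.sum_bijective
      (fun p : Fin (M + 2) × Equiv.Perm (Fin (M + 1)) => emb p.1 p.2)
      (emb_bijective (M + 1))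
      (fun p => if ((emb p.1 p.2) (Fin.last (M + 1)) : ℕ) = t then
        (X : Polynomial ℤ) ^ cbaCount (toWord (M + 2) (emb p.1 p.2)) (M + 2) else 0)
      _ (fun p => rfl)]
    rw [Fintype.sum_prod_type]
    have hterm : ∀ s : Fin (M + 2), (∑ π : Equiv.Perm (Fin (M + 1)),
        if ((emb s π) (Fin.last (M + 1)) : ℕ) = t then
          (X : Polynomial ℤ) ^ cbaCount (toWord (M + 2) (emb s π)) (M + 2) else 0)
        = if s = (⟨t, ht⟩ : Fin (M + 2)) then
            (∑ π : Equiv.Perm (Fin (M + 1)),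
              (X : Polynomial ℤ) ^ cbaCount (toWord (M + 2) (emb s π)) (M + 2)) else 0 := by
      intro s
      by_cases hs : s = (⟨t, ht⟩ : Fin (M + 2))
      · rw [if_pos hs]
        refine Finset.sum_congr rfl fun π _ => ?_
        rw [emb_last, if_pos (by rw [hs])]
      · rw [if_neg hs, Finset.sum_eq_zero]
        intro π _
        rw [emb_last, if_neg (fun h => hs (Fin.ext h))]
    rw [Finset.sum_congr rfl fun s _ => hterm s]
    rw [Finset.sum_ite_eq' univ (⟨t, ht⟩ : Fin (M + 2)), if_pos (mem_univ _)]
    refine Finset.sum_congr rfl fun π _ => ?_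
    rw [cba_emb, pow_add, mul_comm]
  rw [hL]
  have hR : (∑ v ∈ range (M + 1),
      (X : Polynomial ℤ) ^ (if t ≤ v then M - v else 0) * G M v)
      = ∑ π : Equiv.Perm (Fin (M + 1)), ∑ v ∈ range (M + 1),
        (if (π (Fin.last M) : ℕ) = v then
          (X : Polynomial ℤ) ^ (if t ≤ v then M - v else 0)
            * (X : Polynomial ℤ) ^ cbaCount (toWord (M + 1) π) (M + 1) else 0) := by
    rw [Finset.sum_comm]
    refine Finset.sum_congr rfl fun v _ => ?_
    rw [G, Finset.mul_sum]
    refine Finset.sum_congr rfl fun π _ => ?_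
    rw [mul_ite, mul_zero]
  rw [hR]
  refine Finset.sum_congr rfl fun π _ => ?_
  rw [Finset.sum_ite_eq (range (M + 1)) ((π (Fin.last M) : ℕ))
    (fun v => (X : Polynomial ℤ) ^ (if t ≤ v then M - v else 0)
      * (X : Polynomial ℤ) ^ cbaCount (toWord (M + 1) π) (M + 1))]
  rw [if_pos (mem_range.mpr (Fin.is_lt _))]

lemma G_last (M : ℕ) : G (M + 1) (M + 1) = F (M + 1) := by
  rw [G_rec M (M + 1) (by omega), F_succ_sum]
  refine Finset.sum_congr rfl fun v hv => ?_
  rw [mem_range] at hv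
  rw [if_neg (by omega), pow_zero, one_mul]

lemma G_telescope (M u : ℕ) (hu : u ≤ M) :
    G (M + 1) u = G (M + 1) (u + 1) + ((X : Polynomial ℤ) ^ (M - u) - 1) * G M u := by
  rw [G_rec M u (by omega), G_rec M (u + 1) (by omega)]
  have key : ∀ v ∈ range (M + 1),
      (X : Polynomial ℤ) ^ (if u ≤ v then M - v else 0) * G M v
        = (X : Polynomial ℤ) ^ (if u + 1 ≤ v then M - v else 0) * G M v
          + (if v = u then ((X : Polynomial ℤ) ^ (M - u) - 1) * G M u else 0) := by
    intro v hv
    by_cases hvu : v = u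
    · subst hvu
      rw [if_pos (le_refl _), if_neg (by omega), if_pos rfl, pow_zero, one_mul]
      ring
    · rw [if_neg hvu, add_zero]
      congr 2
      exact if_congr (by omega) rfl rfl
  rw [Finset.sum_congr rfl key, Finset.sum_add_distrib]
  congr 1
  rw [Finset.sum_ite_eq' (range (M + 1)) u, if_pos (mem_range.mpr (by omega))]

lemma G_chain : ∀ N p, p ≤ N → G N (N - p) = ∑ m ∈ range (p + 1), F (N - m) * B p m := by
  intro N
  induction N with
  | zero =>
    intro p hp
    have hp0 : p = 0 := by omega
    subst hp0
    rw [Nat.sub_zero, G_zero]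
    simp [F_zero, B_zero_right]
  | succ N ih =>
    intro p
    induction p with
    | zero =>
      intro _
      rw [Nat.sub_zero, G_last]
      simp [B_zero_right]
    | succ p ihp =>
      intro hp
      have hpN : p ≤ N := by omega
      have hsub : N + 1 - (p + 1) = N - p := by omega
      rw [hsub, G_telescope N (N - p) (by omega)]
      have h2 : N - p + 1 = N + 1 - p := by omega
      rw [h2, ihp (by omega), ih p hpN]
      have h3 : N - (N - p) = p := by omega
      rw [h3]
      -- algebra
      have e2 : (∑ m ∈ range (p + 1), F (N + 1 - m) * B p m)
          = (∑ m ∈ range (p + 1), F (N - m) * B p (m + 1)) + F (N + 1) := by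
        rw [Finset.sum_range_succ' (fun m => F (N + 1 - m) * B p m) p]
        rw [Nat.sub_zero, B_zero_right, mul_one]
        congr 1
        rw [Finset.sum_range_succ (fun m => F (N - m) * B p (m + 1)) p]
        rw [B_eq_zero p (p + 1) (by omega), mul_zero, add_zero]
        exact Finset.sum_congr rfl fun m _ => by rw [Nat.succ_sub_succ_eq_sub]
      have expand_rhs : (∑ m ∈ range (p + 1 + 1), F (N + 1 - m) * B (p + 1) m)
          = (∑ m ∈ range (p + 1), F (N + 1 - m) * B p m)
            + ((X : Polynomial ℤ) ^ p - 1) * ∑ m ∈ range (p + 1), F (N - m) * B p m := by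
        rw [Finset.sum_range_succ' (fun m => F (N + 1 - m) * B (p + 1) m) (p + 1)]
        have e1 : ∀ m ∈ range (p + 1), F (N + 1 - (m + 1)) * B (p + 1) (m + 1)
            = F (N - m) * B p (m + 1)
              + ((X : Polynomial ℤ) ^ p - 1) * (F (N - m) * B p m) := by
          intro m _
          rw [Nat.succ_sub_succ_eq_sub, B_succ p m]
          ring
        rw [Finset.sum_congr rfl e1, Finset.sum_add_distrib, ← Finset.mul_sum]
        rw [Nat.sub_zero, B_zero_right, mul_one]
        rw [e2]
        ring
      rw [expand_rhs]
lemma list_prod_getD (l : List ℕ) (f : ℕ → Polynomial ℤ) :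
    ∏ j ∈ range l.length, f (l.getD j 0) = (l.map f).prod := by
  induction l with
  | nil => simp
  | cons a l ih =>
    rw [List.length_cons, Finset.prod_range_succ']
    simp only [List.getD_cons_succ, List.getD_cons_zero]
    rw [ih, List.map_cons, List.prod_cons]
    ring

lemma prod_sort_getD (S' : Finset ℕ) (f : ℕ → Polynomial ℤ) :
    ∏ j ∈ range (S'.sort (· ≤ ·)).length, f ((S'.sort (· ≤ ·)).getD j 0)
      = ∏ t ∈ S', f t := by
  rw [list_prod_getD]
  rw [((Finset.sort_perm_toList S' (· ≤ ·)).map f).prod_eq]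
  exact Finset.prod_map_toList S' f

lemma summand_insert (n m c : ℕ) (S' : Finset ℕ) (hcS' : ∀ t ∈ S', c < t)
    (hcard : S'.card = m) :
    (∏ j ∈ range m,
      ((X : Polynomial ℤ) ^ (n - ((insert c S').sort (· ≤ ·)).getD (m - j) 0) - 1))
      = ∏ t ∈ S', ((X : Polynomial ℤ) ^ (n - t) - 1) := by
  have hc : c ∉ S' := fun h => lt_irrefl c (hcS' c h)
  have hsort : (insert c S').sort (· ≤ ·) = c :: S'.sort (· ≤ ·) :=
    Finset.sort_insert _ (fun b hb => le_of_lt (hcS' b hb)) hc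
  rw [hsort]
  have h1 : (∏ j ∈ range m,
      ((X : Polynomial ℤ) ^ (n - (c :: S'.sort (· ≤ ·)).getD (m - j) 0) - 1))
      = ∏ j ∈ range m,
        ((X : Polynomial ℤ) ^ (n - (c :: S'.sort (· ≤ ·)).getD (m - 1 - j + 1) 0) - 1) :=
    Finset.prod_congr rfl fun j hj => by
      rw [mem_range] at hj
      have he : m - j = m - 1 - j + 1 := by omega
      rw [he]
  rw [h1, Finset.prod_range_reflect
    (fun j => ((X : Polynomial ℤ) ^ (n - (c :: S'.sort (· ≤ ·)).getD (j + 1) 0) - 1)) m]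
  simp only [List.getD_cons_succ]
  have hlen : (S'.sort (· ≤ ·)).length = m := by rw [Finset.length_sort]; exact hcard
  rw [← hlen]
  exact prod_sort_getD S' (fun t => (X : Polynomial ℤ) ^ (n - t) - 1)

lemma image_sub_sub (n : ℕ) (E : Finset ℕ) (hE : ∀ e ∈ E, e ≤ n) :
    (E.image (fun e => n - e)).image (fun e => n - e) = E := by
  ext x
  simp only [Finset.mem_image]
  constructor
  · rintro ⟨y, ⟨z, hz, rfl⟩, rfl⟩
    have hz' := hE z hz
    have hzz : n - (n - z) = z := by omega
    rwa [hzz]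
  · intro hx
    refine ⟨n - x, ⟨x, hx, rfl⟩, ?_⟩
    have := hE x hx
    omega

lemma B_shift (n c m : ℕ) (hcn : c ≤ n) :
    B (n - c) m = ∑ S' ∈ (Finset.Icc (c + 1) n).powersetCard m,
      ∏ t ∈ S', ((X : Polynomial ℤ) ^ (n - t) - 1) := by
  classical
  rw [B]
  refine Finset.sum_bij' (i := fun E _ => E.image (fun e => n - e))
    (j := fun S' _ => S'.image (fun t => n - t)) ?_ ?_ ?_ ?_ ?_
  · intro E hE
    rw [Finset.mem_powersetCard] at hE ⊢
    obtain ⟨hEsub, hEcard⟩ := hE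
    constructor
    · intro x hx
      obtain ⟨e, he, rfl⟩ := Finset.mem_image.mp hx
      have := mem_range.mp (hEsub he)
      rw [Finset.mem_Icc]
      omega
    · rw [Finset.card_image_of_injOn, hEcard]
      intro x hx y hy hxy
      have hx' := mem_range.mp (hEsub hx)
      have hy' := mem_range.mp (hEsub hy)
      have hxy' : n - x = n - y := hxy
      omega
  · intro S' hS'
    rw [Finset.mem_powersetCard] at hS' ⊢
    obtain ⟨hsub, hcard⟩ := hS'
    constructor
    · intro x hx
      obtain ⟨e, he, rfl⟩ := Finset.mem_image.mp hx
      have := Finset.mem_Icc.mp (hsub he)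
      rw [mem_range]
      omega
    · rw [Finset.card_image_of_injOn, hcard]
      intro x hx y hy hxy
      have hx' := Finset.mem_Icc.mp (hsub hx)
      have hy' := Finset.mem_Icc.mp (hsub hy)
      have hxy' : n - x = n - y := hxy
      omega
  · intro E hE
    rw [Finset.mem_powersetCard] at hE
    show (E.image (fun e => n - e)).image (fun e => n - e) = E
    exact image_sub_sub n E (fun e he => by
      have := mem_range.mp (hE.1 he); omega)
  · intro S' hS'
    rw [Finset.mem_powersetCard] at hS'
    show (S'.image (fun e => n - e)).image (fun e => n - e) = S'
    exact image_sub_sub n S' (fun t ht => by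
      have := Finset.mem_Icc.mp (hS'.1 ht); omega)
  · intro E hE
    rw [Finset.mem_powersetCard] at hE
    rw [Finset.prod_image (by
      intro x hx y hy hxy
      have hx' := mem_range.mp (hE.1 hx)
      have hy' := mem_range.mp (hE.1 hy)
      have hxy' : n - x = n - y := hxy
      omega)]
    refine Finset.prod_congr rfl fun e he => ?_
    have he' := mem_range.mp (hE.1 he)
    have h2 : n - (n - e) = e := by omega
    show (X : Polynomial ℤ) ^ e - 1 = (X : Polynomial ℤ) ^ (n - (n - e)) - 1
    rw [h2]

lemma a_eq (n m : ℕ) : a n (m + 1) = ∑ p ∈ range n, B p m := by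
  classical
  have hreindex : (∑ p ∈ range n, B p m) = ∑ c ∈ Finset.Icc 1 n, B (n - c) m := by
    refine Finset.sum_bij' (i := fun p _ => n - p) (j := fun c _ => n - c)
      ?_ ?_ ?_ ?_ ?_
    · intro p hp
      rw [mem_range] at hp
      rw [Finset.mem_Icc]
      omega
    · intro c hc
      rw [Finset.mem_Icc] at hc
      rw [mem_range]
      omega
    · intro p hp
      rw [mem_range] at hp
      show n - (n - p) = p
      omega
    · intro c hc
      rw [Finset.mem_Icc] at hc
      show n - (n - c) = c
      omega
    · intro p hp
      rw [mem_range] at hp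
      show B p m = B (n - (n - p)) m
      have h2 : n - (n - p) = p := by omega
      rw [h2]
  rw [hreindex]
  have hB : ∀ c ∈ Finset.Icc 1 n, B (n - c) m
      = ∑ S' ∈ (Finset.Icc (c + 1) n).powersetCard m,
          ∏ t ∈ S', ((X : Polynomial ℤ) ^ (n - t) - 1) := by
    intro c hc
    exact B_shift n c m (Finset.mem_Icc.mp hc).2
  rw [Finset.sum_congr rfl hB]
  rw [Finset.sum_sigma' (Finset.Icc 1 n)
    (fun c => (Finset.Icc (c + 1) n).powersetCard m)
    (fun _ S' => ∏ t ∈ S', ((X : Polynomial ℤ) ^ (n - t) - 1))]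
  unfold a
  have hk : ∀ (j : ℕ), m + 1 - j - 1 = m - j := fun j => by omega
  refine (Finset.sum_bij' (i := fun x _ => insert x.1 x.2)
    (j := fun S _ => ⟨S.min.untopD 0, S.erase (S.min.untopD 0)⟩)
    ?_ ?_ ?_ ?_ ?_).symm
  · rintro ⟨c, S'⟩ hx
    dsimp only
    rw [Finset.mem_sigma] at hx
    obtain ⟨hc, hS'⟩ := hx
    dsimp only at hc hS'
    rw [Finset.mem_powersetCard] at hS' ⊢
    rw [Finset.mem_Icc] at hc
    obtain ⟨hsub, hcard⟩ := hS'
    have hcnot : c ∉ S' := by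
      intro h
      have := Finset.mem_Icc.mp (hsub h)
      omega
    constructor
    · intro x hx
      rcases Finset.mem_insert.mp hx with h | hx'
      · rw [Finset.mem_Icc]; omega
      · have := Finset.mem_Icc.mp (hsub hx')
        rw [Finset.mem_Icc]; omega
    · rw [Finset.card_insert_of_notMem hcnot, hcard]
  · intro S hS
    have hSc := (Finset.mem_powersetCard.mp hS).2
    have hSsub := (Finset.mem_powersetCard.mp hS).1
    have hne : S.Nonempty := Finset.card_pos.mp (by rw [hSc]; omega)
    have hmin_eq : S.min.untopD 0 = S.min' hne := by
      rw [← Finset.coe_min' hne]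
      rfl
    rw [Finset.mem_sigma, hmin_eq]
    constructor
    · exact hSsub (Finset.min'_mem S hne)
    · rw [Finset.mem_powersetCard]
      constructor
      · intro x hx
        have hxS : x ∈ S := Finset.mem_of_mem_erase hx
        have hxne : x ≠ S.min' hne := Finset.ne_of_mem_erase hx
        have h1 := Finset.mem_Icc.mp (hSsub hxS)
        have h2 := Finset.min'_le S x hxS
        rw [Finset.mem_Icc]
        constructor
        · show S.min' hne + 1 ≤ x
          rcases lt_or_eq_of_le h2 with h3 | h3
          · omega
          · exact absurd h3.symm hxne
        · exact h1.2
      · rw [Finset.card_erase_of_mem (Finset.min'_mem S hne), hSc]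
        omega
  · rintro ⟨c, S'⟩ hx
    dsimp only
    rw [Finset.mem_sigma] at hx
    obtain ⟨hc, hS'⟩ := hx
    dsimp only at hc hS'
    rw [Finset.mem_powersetCard] at hS'
    have hlt : ∀ t ∈ S', c < t := by
      intro t ht
      have := Finset.mem_Icc.mp (hS'.1 ht)
      omega
    have hcnot : c ∉ S' := fun h => lt_irrefl c (hlt c h)
    have hne : (insert c S').Nonempty := Finset.insert_nonempty c S'
    have hmin_eq : (insert c S').min.untopD 0 = (insert c S').min' hne := by
      rw [← Finset.coe_min' hne]
      rfl
    have hmin : (insert c S').min' hne = c := by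
      refine le_antisymm (Finset.min'_le _ c (Finset.mem_insert_self c S')) ?_
      refine Finset.le_min' _ _ _ fun y hy => ?_
      rcases Finset.mem_insert.mp hy with h | hy'
      · exact h.ge
      · exact le_of_lt (hlt y hy')
    rw [hmin_eq, hmin, Finset.erase_insert hcnot]
  · intro S hS
    dsimp only
    have hSc := (Finset.mem_powersetCard.mp hS).2
    have hne : S.Nonempty := Finset.card_pos.mp (by rw [hSc]; omega)
    have hmin_eq : S.min.untopD 0 = S.min' hne := by
      rw [← Finset.coe_min' hne]
      rfl
    rw [hmin_eq]
    exact Finset.insert_erase (Finset.min'_mem S hne)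
  · rintro ⟨c, S'⟩ hx
    dsimp only
    rw [Finset.mem_sigma] at hx
    obtain ⟨hc, hS'⟩ := hx
    dsimp only at hc hS'
    rw [Finset.mem_powersetCard] at hS'
    have hlt : ∀ t ∈ S', c < t := by
      intro t ht
      have := Finset.mem_Icc.mp (hS'.1 ht)
      omega
    simp only [hk, Nat.add_sub_cancel]
    exact (summand_insert n m c S' hlt hS'.2).symm
end CbaAux

theorem cba_distribution_recurrence :
    F 0 = 1 ∧ ∀ n, 1 ≤ n → F n = ∑ k ∈ Icc 1 n, a n k * F (n - k) := by
  refine ⟨CbaAux.F_zero, ?_⟩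
  intro n hn
  obtain ⟨N, rfl⟩ : ∃ N, n = N + 1 := ⟨n - 1, by omega⟩
  rw [CbaAux.F_succ_sum]
  rw [← Finset.sum_range_reflect (fun u => CbaAux.G N u) (N + 1)]
  have h1 : ∀ p ∈ range (N + 1), CbaAux.G N (N + 1 - 1 - p)
      = ∑ m ∈ range (N + 1), F (N - m) * CbaAux.B p m := by
    intro p hp
    rw [mem_range] at hp
    have h2 : N + 1 - 1 - p = N - p := by omega
    rw [h2, CbaAux.G_chain N p (by omega)]
    refine Finset.sum_subset (Finset.range_subset_range.mpr (by omega)) ?_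
    intro m hm hnot
    rw [mem_range] at hm
    rw [mem_range, not_lt] at hnot
    rw [CbaAux.B_eq_zero p m (by omega), mul_zero]
  rw [Finset.sum_congr rfl h1]
  rw [Finset.sum_comm]
  have h3 : ∀ m ∈ range (N + 1),
      (∑ p ∈ range (N + 1), F (N - m) * CbaAux.B p m)
        = a (N + 1) (m + 1) * F (N - m) := by
    intro m _
    rw [← Finset.mul_sum, CbaAux.a_eq (N + 1) m, mul_comm]
  rw [Finset.sum_congr rfl h3]
  refine (Finset.sum_bij' (i := fun k _ => k - 1) (j := fun m _ => m + 1)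
    ?_ ?_ ?_ ?_ ?_).symm
  · intro k hk; rw [Finset.mem_Icc] at hk; rw [mem_range]; show k - 1 < N + 1; omega
  · intro m hm; rw [mem_range] at hm; rw [Finset.mem_Icc]
    show 1 ≤ m + 1 ∧ m + 1 ≤ N + 1
    omega
  · intro k hk; rw [Finset.mem_Icc] at hk; show k - 1 + 1 = k; omega
  · intro m hm; show m + 1 - 1 = m; omega
  · intro k hk
    rw [Finset.mem_Icc] at hk
    have e1 : k - 1 + 1 = k := by omega
    have e2 : N - (k - 1) = N + 1 - k := by omega
    rw [e1, e2]
end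

section
/- Let a(n,k) = Σ_{n ≥ t_1 > ⋯ > t_k ≥ 1} Π_{j=1}^{k−1} (q^{n−t_j} − 1) and b(n,k) = Σ_{n ≥ t_1 > ⋯ > t_k ≥ 1} t_k Π_{j=1}^{k} (q^{n−t_j} − 1). Then for n ≥ 1 and k ≥ 2, a(n,k) = b(n−1,k−1). -/
open Finset Polynomial

private def fAdd : ℕ ↪ ℕ := ⟨(· + 1), fun a b => Nat.succ.inj⟩

private lemma sort_map_add (T : Finset ℕ) :
    (T.map fAdd).sort (· ≤ ·) = (T.sort (· ≤ ·)).map (· + 1) := by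
  rw [Finset.sort, Finset.map_val,
    ← Multiset.map_sort fAdd T.val (· ≤ ·) (· ≤ ·)
      (fun a _ b _ => by simpa [fAdd, DFunLike.coe] using (Nat.add_le_add_iff_right (k := 1)).symm)]
  rfl

private lemma sort_ins (m : ℕ) (T : Finset ℕ) (h : ∀ t ∈ T, m ≤ t) :
    (insert m (T.map fAdd)).sort (· ≤ ·) = m :: (T.sort (· ≤ ·)).map (· + 1) := by
  rw [Finset.sort_insert, sort_map_add]
  · intro b hb; simp only [Finset.mem_map] at hb
    obtain ⟨t, ht, rfl⟩ := hb; exact (h t ht).trans (Nat.le_succ t)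
  · simp only [Finset.mem_map]; rintro ⟨t, ht, htm⟩
    have := h t ht; simp only [fAdd, Function.Embedding.coeFn_mk, DFunLike.coe] at htm; omega

private lemma getD_min (S : Finset ℕ) (hne : S.Nonempty) :
    (S.sort (· ≤ ·)).getD 0 0 = S.min' hne := by
  have hl : 0 < (S.sort (· ≤ ·)).length := by
    rw [Finset.length_sort]; exact Finset.card_pos.2 hne
  rw [List.getD_eq_getElem _ _ hl, Finset.sorted_zero_eq_min']

/-- `b n k = Σ_{n ≥ t_1 > ⋯ > t_k ≥ 1} t_k Π_{j=1}^{k} (q^{n - t_j} - 1)`. -/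
noncomputable def b (n k : ℕ) : Polynomial ℤ :=
  ∑ S ∈ (Finset.Icc 1 n).powersetCard k,
    ((S.sort (· ≤ ·)).getD 0 0 : Polynomial ℤ) *
      ∏ j ∈ range k,
        ((X : Polynomial ℤ) ^ (n - (S.sort (· ≤ ·)).getD (k - j - 1) 0) - 1)

theorem a_eq_b_shift (n k : ℕ) (hn : 1 ≤ n) (hk : 2 ≤ k) :
    a n k = b (n - 1) (k - 1) := by
  obtain ⟨k', rfl⟩ : ∃ k', k = k' + 1 := ⟨k - 1, by omega⟩
  obtain ⟨n', rfl⟩ : ∃ n', n = n' + 1 := ⟨n - 1, by omega⟩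
  have hk' : 1 ≤ k' := by omega
  simp only [Nat.add_sub_cancel]
  rw [a, b]
  -- P T : the b-product
  set P : Finset ℕ → Polynomial ℤ := fun T =>
    ∏ j ∈ range k', ((X : Polynomial ℤ) ^ (n' - (T.sort (· ≤ ·)).getD (k' - j - 1) 0) - 1)
    with hP
  -- rewrite b summands as inner sums over m
  have hb : ∀ T ∈ (Finset.Icc 1 n').powersetCard k',
      (((T.sort (· ≤ ·)).getD 0 0 : ℕ) : Polynomial ℤ) * P T
        = ∑ m ∈ Finset.Icc 1 ((T.sort (· ≤ ·)).getD 0 0), P T := by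
    intro T _
    rw [Finset.sum_const, Nat.card_Icc, Nat.add_sub_cancel, nsmul_eq_mul]
  rw [show (∑ S ∈ (Finset.Icc 1 n').powersetCard k',
      (((S.sort (· ≤ ·)).getD 0 0 : ℕ) : Polynomial ℤ) *
        ∏ j ∈ range k', ((X : Polynomial ℤ) ^ (n' - (S.sort (· ≤ ·)).getD (k' - j - 1) 0) - 1))
      = ∑ S ∈ (Finset.Icc 1 n').powersetCard k',
        (((S.sort (· ≤ ·)).getD 0 0 : ℕ) : Polynomial ℤ) * P S from rfl]
  rw [Finset.sum_congr rfl hb, Finset.sum_sigma']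
  symm
  refine Finset.sum_nbij'
    (i := fun (p : Σ _ : Finset ℕ, ℕ) => insert p.2 (p.1.map fAdd))
    (j := fun S => (⟨(S.erase ((S.sort (· ≤ ·)).getD 0 0)).image (· - 1),
        (S.sort (· ≤ ·)).getD 0 0⟩ : Σ _ : Finset ℕ, ℕ))
    ?_ ?_ ?_ ?_ ?_
  case refine_1 =>
    rintro ⟨T, m⟩ hp
    simp only [Finset.mem_sigma, Finset.mem_powersetCard, Finset.mem_Icc] at hp ⊢
    obtain ⟨⟨hTsub, hTcard⟩, hm1, hm2⟩ := hp
    have hTne : T.Nonempty := Finset.card_pos.1 (by omega)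
    rw [getD_min T hTne] at hm2
    have hmt : ∀ t ∈ T, m ≤ t := fun t ht => hm2.trans (T.min'_le t ht)
    have hnot : m ∉ T.map fAdd := by
      simp only [Finset.mem_map, fAdd, Function.Embedding.coeFn_mk, DFunLike.coe]
      rintro ⟨t, ht, rfl⟩
      have := hmt t ht; omega
    have hminT := hTsub (T.min'_mem hTne)
    simp only [Finset.mem_Icc] at hminT
    refine ⟨?_, ?_⟩
    · intro x hx
      rcases Finset.mem_insert.1 hx with rfl | hx
      · exact Finset.mem_Icc.2 ⟨hm1, by omega⟩
      · simp only [Finset.mem_map, fAdd, Function.Embedding.coeFn_mk, DFunLike.coe] at hx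
        obtain ⟨t, ht, rfl⟩ := hx
        have := hTsub ht; simp only [Finset.mem_Icc] at this
        exact Finset.mem_Icc.2 ⟨by omega, by omega⟩
    · rw [Finset.card_insert_of_notMem hnot, Finset.card_map, hTcard]
  case refine_2 =>
    intro S hS
    simp only [Finset.mem_powersetCard] at hS
    obtain ⟨hSsub, hScard⟩ := hS
    have hSne : S.Nonempty := Finset.card_pos.1 (by omega)
    have hgd : (S.sort (· ≤ ·)).getD 0 0 = S.min' hSne := getD_min S hSne
    set mS := S.min' hSne with hmS
    have hbound : ∀ x ∈ S, 1 ≤ x ∧ x ≤ n' + 1 := fun x hx => Finset.mem_Icc.1 (hSsub hx)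
    have hmS1 : 1 ≤ mS := (hbound _ (S.min'_mem hSne)).1
    have herase : ∀ x ∈ S.erase mS, mS + 1 ≤ x := by
      intro x hx
      have h1 := Finset.mem_of_mem_erase hx
      have h2 := Finset.ne_of_mem_erase hx
      have := S.min'_le x h1
      omega
    have hTcard : ((S.erase mS).image (· - 1)).card = k' := by
      rw [Finset.card_image_of_injOn, Finset.card_erase_of_mem (S.min'_mem hSne), hScard,
        Nat.add_sub_cancel]
      intro x hx y hy hxy
      have := herase x hx; have := herase y hy
      simp only at hxy; omega
    have hTne : ((S.erase mS).image (· - 1)).Nonempty := Finset.card_pos.1 (by omega)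
    simp only [Finset.mem_sigma, Finset.mem_powersetCard, Finset.mem_Icc, hgd]
    refine ⟨⟨?_, hTcard⟩, hmS1, ?_⟩
    · intro t ht
      simp only [Finset.mem_image] at ht
      obtain ⟨x, hx, rfl⟩ := ht
      have h1 := herase x hx
      have h2 := (hbound x (Finset.mem_of_mem_erase hx)).2
      exact Finset.mem_Icc.2 ⟨by omega, by omega⟩
    · rw [getD_min _ hTne]
      have := Finset.min'_mem _ hTne
      simp only [Finset.mem_image] at this
      obtain ⟨x, hx, hxe⟩ := this
      have := herase x hx
      omega
  case refine_3 =>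
    rintro ⟨T, m⟩ hp
    simp only [Finset.mem_sigma, Finset.mem_powersetCard, Finset.mem_Icc] at hp
    obtain ⟨⟨hTsub, hTcard⟩, hm1, hm2⟩ := hp
    have hTne : T.Nonempty := Finset.card_pos.1 (by omega)
    rw [getD_min T hTne] at hm2
    have hmt : ∀ t ∈ T, m ≤ t := fun t ht => hm2.trans (T.min'_le t ht)
    have hnot : m ∉ T.map fAdd := by
      simp only [Finset.mem_map, fAdd, Function.Embedding.coeFn_mk, DFunLike.coe]
      rintro ⟨t, ht, rfl⟩
      have := hmt t ht; omega
    have hsort := sort_ins m T hmt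
    have hgd : ((insert m (T.map fAdd)).sort (· ≤ ·)).getD 0 0 = m := by
      rw [hsort]; rfl
    simp only [hgd]
    congr 1
    rw [Finset.erase_insert hnot, Finset.map_eq_image, Finset.image_image]
    rw [show ((fun x => x - 1) ∘ fAdd) = id from funext fun x => by
      simp [fAdd, DFunLike.coe]]
    exact Finset.image_id
  case refine_4 =>
    intro S hS
    simp only [Finset.mem_powersetCard] at hS
    obtain ⟨hSsub, hScard⟩ := hS
    have hSne : S.Nonempty := Finset.card_pos.1 (by omega)
    have hgd : (S.sort (· ≤ ·)).getD 0 0 = S.min' hSne := getD_min S hSne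
    set mS := S.min' hSne with hmS
    have herase : ∀ x ∈ S.erase mS, mS + 1 ≤ x := by
      intro x hx
      have h1 := Finset.mem_of_mem_erase hx
      have h2 := Finset.ne_of_mem_erase hx
      have := S.min'_le x h1
      omega
    simp only [hgd]
    rw [Finset.map_eq_image, Finset.image_image]
    rw [show Finset.image (fAdd ∘ (· - 1)) (S.erase mS) = S.erase mS from ?_]
    · exact Finset.insert_erase (S.min'_mem hSne)
    · refine Finset.image_congr (fun x hx => ?_) |>.trans Finset.image_id
      have := herase x hx
      simp only [Function.comp_apply, fAdd, Function.Embedding.coeFn_mk, id_eq, DFunLike.coe]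
      omega
  case refine_5 =>
    rintro ⟨T, m⟩ hp
    simp only [Finset.mem_sigma, Finset.mem_powersetCard, Finset.mem_Icc] at hp
    obtain ⟨⟨hTsub, hTcard⟩, hm1, hm2⟩ := hp
    have hTne : T.Nonempty := Finset.card_pos.1 (by omega)
    rw [getD_min T hTne] at hm2
    have hmt : ∀ t ∈ T, m ≤ t := fun t ht => hm2.trans (T.min'_le t ht)
    have hsort := sort_ins m T hmt
    simp only [hP, Nat.add_sub_cancel, hsort]
    refine Finset.prod_congr rfl fun j hj => ?_
    have hj' : j < k' := Finset.mem_range.1 hj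
    have hidx : k' + 1 - j - 1 = (k' - j - 1) + 1 := by omega
    rw [hidx, List.getD_cons_succ]
    have hlen : k' - j - 1 < (T.sort (· ≤ ·)).length := by
      rw [Finset.length_sort, hTcard]; omega
    have hmap : (List.map (· + 1) (T.sort (· ≤ ·))).getD (k' - j - 1) 0
        = (T.sort (· ≤ ·)).getD (k' - j - 1) 0 + 1 := by
      rw [List.getD_eq_getElem _ _ (by simpa using hlen), List.getElem_map,
        List.getD_eq_getElem _ _ hlen]
    rw [hmap]
    congr 2
    omega
end
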